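/- Let Λ be a commutative Noetherian ring, I an ideal, and M, N Λ-modules such that cl(Ann_Λ M + Ann_Λ N) ⊇ Iⁿ. Let φ: Λ → Λ̃ satisfy: Λ̃ is Zariski with respect to Ĩ = φ(I)Λ̃, φ is flat, and φ induces Λ/Iᵐ ≅ Λ̃/Ĩᵐ for all m. Then (M⊗_Λ N)Iⁿ = (M⊗_Λ N)I^(n+1), and the natural maps give isomorphisms M̃ ⊗_Λ Ñ ≅ M̃ ⊗_Λ̃ Ñ ≅ (M⊗_Λ N)⊗_Λ Λ̃ ≅ (M⊗_Λ N)/(M⊗_Λ N)Iⁿ ≅ (M/MIⁿ) ⊗_Λ (N/NIⁿ). -/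
import Mathlib


open TensorProduct

theorem auxKill {R S P : Type*} [CommRing R] [CommRing S] [Algebra R S]
    [AddCommGroup P] [Module R P] [Module S P] [IsScalarTower R S P]
    {J : Ideal R} (h : ∀ j ∈ J, ∀ p : P, j • p = 0) :
    ∀ t ∈ J.map (algebraMap R S), ∀ p : P, t • p = 0 := by
  intro t ht
  refine Submodule.span_induction ?_ ?_ ?_ ?_ ht
  · rintro _ ⟨j, hj, rfl⟩ p
    rw [algebraMap_smul]
    exact h j hj p
  · intro p; rw [zero_smul]
  · intro x y _ _ hx hy p; rw [add_smul, hx, hy, add_zero]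
  · intro s x _ hx p; rw [smul_eq_mul, mul_smul, hx, smul_zero]

theorem auxNak (Λ : Type) [CommRing Λ] [IsNoetherianRing Λ] (I : Ideal Λ)
    (T : Type) [CommRing T] [Algebra Λ T] (n : ℕ)
    (hzar : ∀ x ∈ I.map (algebraMap Λ T), IsUnit (1 + x))
    (J : Ideal Λ) (hle : (I ^ n : Ideal Λ) ≤ J ⊔ I ^ (n+1)) :
    (I.map (algebraMap Λ T)) ^ n ≤ J.map (algebraMap Λ T) := by
  set φ := algebraMap Λ T
  set Jt := J.map φ
  have hmap : (I.map φ) ^ n ≤ Jt ⊔ (I.map φ) ^ (n+1) := by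
    rw [← Ideal.map_pow, ← Ideal.map_pow]
    calc (I ^ n).map φ ≤ (J ⊔ I ^ (n+1)).map φ := Ideal.map_mono hle
      _ = Jt ⊔ (I ^ (n+1)).map φ := by rw [Ideal.map_sup]
  set b : Submodule T (T ⧸ Jt) := Submodule.map Jt.mkQ ((I.map φ) ^ n : Ideal T)
  have hfg : b.FG := by
    apply Submodule.FG.map
    rw [← Ideal.map_pow]
    exact Ideal.FG.map (IsNoetherian.noetherian _) φ
  have hb : b ≤ I.map φ • b := by
    calc b ≤ Submodule.map Jt.mkQ (Jt ⊔ (I.map φ) ^ (n+1)) := Submodule.map_mono hmap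
      _ = Submodule.map Jt.mkQ Jt ⊔ Submodule.map Jt.mkQ ((I.map φ) ^ (n+1)) := by
          rw [Submodule.map_sup]
      _ ≤ I.map φ • b := by
          apply sup_le
          · intro x hx
            obtain ⟨y, hy, rfl⟩ := hx
            have : Jt.mkQ y = 0 := (Submodule.Quotient.mk_eq_zero _).mpr hy
            rw [this]; exact Submodule.zero_mem _
          · rw [pow_succ, mul_comm, ← Ideal.smul_eq_mul, Submodule.map_smul'']
  have hjac : I.map φ ≤ Ideal.jacobson ⊥ := by
    intro x hx
    rw [Ideal.mem_jacobson_bot]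
    intro y
    have := hzar (x * y) (Ideal.mul_mem_right y _ hx)
    rwa [add_comm] at this
  have hbot : b = ⊥ :=
    Submodule.eq_bot_of_le_smul_of_le_jacobson_bot (I.map φ) b hfg hb hjac
  intro x hx
  have : Jt.mkQ x ∈ b := Submodule.mem_map_of_mem hx
  rw [hbot] at this
  exact (Submodule.Quotient.mk_eq_zero _).mp (Submodule.mem_bot _ |>.mp this)


set_option maxHeartbeats 1600000

/-- Let `Λ` be a commutative Noetherian ring, `I` an ideal, and `M`, `N`
`Λ`-modules with `cl(Ann_Λ M + Ann_Λ N) ⊇ Iⁿ`. Let `φ : Λ → Λ̃` (= `T`) satisfy: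
`Λ̃` is Zariski with respect to `Ĩ = φ(I)Λ̃`, `φ` is flat, and `φ` induces
`Λ/Iᵐ ≅ Λ̃/Ĩᵐ` for all `m`. Then `(M ⊗_Λ N)Iⁿ = (M ⊗_Λ N)I^(n+1)`, and the natural
maps give isomorphisms
`M̃ ⊗_Λ Ñ ≅ M̃ ⊗_Λ̃ Ñ ≅ (M ⊗_Λ N) ⊗_Λ Λ̃ ≅ (M ⊗_Λ N)/(M ⊗_Λ N)Iⁿ ≅ (M/MIⁿ) ⊗_Λ (N/NIⁿ)`
(each isomorphism characterized by where it sends the images of the canonical maps,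
with `M̃ = Λ̃ ⊗_Λ M`). -/
theorem stmt4 (Λ : Type) [CommRing Λ] [IsNoetherianRing Λ] (I : Ideal Λ)
    (T : Type) [CommRing T] [Algebra Λ T] [Module.Flat Λ T]
    (hzar : ∀ x ∈ I.map (algebraMap Λ T), IsUnit (1 + x))
    (hiso : ∀ m : ℕ, Function.Bijective
      (Ideal.quotientMap (I := I ^ m) ((I.map (algebraMap Λ T)) ^ m) (algebraMap Λ T)
        (by rw [← Ideal.map_pow]; exact Ideal.le_comap_map)))
    (M : Type) [AddCommGroup M] [Module Λ M]
    (N : Type) [AddCommGroup N] [Module Λ N] (n : ℕ)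
    (hcl : (I ^ n : Ideal Λ) ≤ ⨅ m : ℕ,
      (((⊤ : Submodule Λ M).annihilator ⊔ (⊤ : Submodule Λ N).annihilator) ⊔ I ^ m)) :
    I ^ n • (⊤ : Submodule Λ (M ⊗[Λ] N)) = I ^ (n + 1) • ⊤ ∧
    (∃ e₁ : ((T ⊗[Λ] M) ⊗[Λ] (T ⊗[Λ] N)) ≃ₗ[Λ] ((T ⊗[Λ] M) ⊗[T] (T ⊗[Λ] N)),
      ∀ (x : T ⊗[Λ] M) (y : T ⊗[Λ] N), e₁ (x ⊗ₜ y) = x ⊗ₜ y) ∧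
    (∃ e₂ : (T ⊗[Λ] (M ⊗[Λ] N)) ≃ₗ[Λ] ((T ⊗[Λ] M) ⊗[T] (T ⊗[Λ] N)),
      ∀ (t : T) (m : M) (x : N), e₂ (t ⊗ₜ (m ⊗ₜ x)) = (t ⊗ₜ m) ⊗ₜ ((1 : T) ⊗ₜ x)) ∧
    (∃ e₃ : (T ⊗[Λ] (M ⊗[Λ] N)) ≃ₗ[Λ] ((M ⊗[Λ] N) ⧸ (I ^ n • (⊤ : Submodule Λ (M ⊗[Λ] N)))),
      ∀ x : M ⊗[Λ] N, e₃ ((1 : T) ⊗ₜ x) = Submodule.Quotient.mk x) ∧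
    (∃ e₄ : ((M ⊗[Λ] N) ⧸ (I ^ n • (⊤ : Submodule Λ (M ⊗[Λ] N)))) ≃ₗ[Λ]
        ((M ⧸ (I ^ n • (⊤ : Submodule Λ M))) ⊗[Λ] (N ⧸ (I ^ n • (⊤ : Submodule Λ N)))),
      ∀ (m : M) (x : N), e₄ (Submodule.Quotient.mk (m ⊗ₜ x)) =
        Submodule.Quotient.mk m ⊗ₜ Submodule.Quotient.mk x) := by
  have h1 : ∀ m : ℕ, (I ^ n : Ideal Λ) ≤
      ((⊤ : Submodule Λ M).annihilator ⊔ (⊤ : Submodule Λ N).annihilator) ⊔ I ^ m :=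
    fun m => hcl.trans (iInf_le _ m)
  -- J kills M ⊗ N
  have hannK : ∀ j ∈ (⊤ : Submodule Λ M).annihilator ⊔ (⊤ : Submodule Λ N).annihilator,
      ∀ z : M ⊗[Λ] N, j • z = 0 := by
    intro j hj z
    obtain ⟨a, ha, b, hb, rfl⟩ := Submodule.mem_sup.mp hj
    induction z using TensorProduct.induction_on with
    | zero => rw [smul_zero]
    | tmul m x =>
        rw [add_smul, smul_tmul' a, Submodule.mem_annihilator.mp ha m trivial, zero_tmul,
          zero_add, smul_tmul' b, smul_tmul, Submodule.mem_annihilator.mp hb x trivial,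
          tmul_zero]
    | add z w hz hw => rw [smul_add, hz, hw, add_zero]
  -- Part 1
  have part1 : I ^ n • (⊤ : Submodule Λ (M ⊗[Λ] N)) = I ^ (n + 1) • ⊤ := by
    apply le_antisymm
    · rw [Submodule.smul_le]
      intro a ha z _
      obtain ⟨j, hj, b, hb, rfl⟩ := Submodule.mem_sup.mp (h1 (n+1) ha)
      rw [add_smul, hannK j hj z, zero_add]
      exact Submodule.smul_mem_smul hb trivial
    · exact Submodule.smul_mono_left (Ideal.pow_le_pow_right (Nat.le_succ n))
  -- annihilator facts on base-changed modules
  have hannTM : ∀ j ∈ (⊤ : Submodule Λ M).annihilator, ∀ x : T ⊗[Λ] M, j • x = 0 := by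
    intro j hj x
    induction x using TensorProduct.induction_on with
    | zero => rw [smul_zero]
    | tmul t m =>
        rw [smul_tmul' j, smul_tmul, Submodule.mem_annihilator.mp hj m trivial, tmul_zero]
    | add z w hz hw => rw [smul_add, hz, hw, add_zero]
  have hannTN : ∀ j ∈ (⊤ : Submodule Λ N).annihilator, ∀ x : T ⊗[Λ] N, j • x = 0 := by
    intro j hj x
    induction x using TensorProduct.induction_on with
    | zero => rw [smul_zero]
    | tmul t m =>
        rw [smul_tmul' j, smul_tmul, Submodule.mem_annihilator.mp hj m trivial, tmul_zero]
    | add z w hz hw => rw [smul_add, hz, hw, add_zero]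
  have hannTK : ∀ j ∈ (⊤ : Submodule Λ M).annihilator ⊔ (⊤ : Submodule Λ N).annihilator,
      ∀ z : T ⊗[Λ] (M ⊗[Λ] N), j • z = 0 := by
    intro j hj z
    induction z using TensorProduct.induction_on with
    | zero => rw [smul_zero]
    | tmul t k => rw [smul_tmul' j, smul_tmul, hannK j hj k, tmul_zero]
    | add z w hz hw => rw [smul_add, hz, hw, add_zero]
  have hannP : ∀ j ∈ (⊤ : Submodule Λ M).annihilator ⊔ (⊤ : Submodule Λ N).annihilator,
      ∀ z : (T ⊗[Λ] M) ⊗[Λ] (T ⊗[Λ] N), j • z = 0 := by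
    intro j hj z
    obtain ⟨a, ha, b, hb, rfl⟩ := Submodule.mem_sup.mp hj
    induction z using TensorProduct.induction_on with
    | zero => rw [smul_zero]
    | tmul x y =>
        rw [add_smul, smul_tmul' a, hannTM a ha x, zero_tmul, zero_add,
          smul_tmul' b, smul_tmul, hannTN b hb y, tmul_zero]
    | add z w hz hw => rw [smul_add, hz, hw, add_zero]
  have hannP' : ∀ j ∈ (⊤ : Submodule Λ M).annihilator ⊔ (⊤ : Submodule Λ N).annihilator,
      ∀ z : (T ⊗[Λ] N) ⊗[Λ] (T ⊗[Λ] M), j • z = 0 := by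
    intro j hj z
    obtain ⟨a, ha, b, hb, rfl⟩ := Submodule.mem_sup.mp hj
    induction z using TensorProduct.induction_on with
    | zero => rw [smul_zero]
    | tmul x y =>
        rw [add_smul, smul_tmul' a, smul_tmul, hannTM a ha y, tmul_zero, zero_add,
          smul_tmul' b, hannTN b hb x, zero_tmul]
    | add z w hz hw => rw [smul_add, hz, hw, add_zero]
  -- Nakayama: Ĩ^n ≤ J̃
  have hNak : (I.map (algebraMap Λ T)) ^ n ≤
      (((⊤ : Submodule Λ M).annihilator ⊔ (⊤ : Submodule Λ N).annihilator) :
        Ideal Λ).map (algebraMap Λ T) :=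
    auxNak Λ I T n hzar _ (h1 (n+1))
  have hITK : ∀ t ∈ (I.map (algebraMap Λ T)) ^ n, ∀ z : T ⊗[Λ] (M ⊗[Λ] N), t • z = 0 :=
    fun t ht => auxKill (P := T ⊗[Λ] (M ⊗[Λ] N)) hannTK t (hNak ht)
  have hIP : ∀ t ∈ (I.map (algebraMap Λ T)) ^ n,
      ∀ z : (T ⊗[Λ] M) ⊗[Λ] (T ⊗[Λ] N), t • z = 0 :=
    fun t ht => auxKill (P := (T ⊗[Λ] M) ⊗[Λ] (T ⊗[Λ] N)) hannP t (hNak ht)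
  have hIP' : ∀ t ∈ (I.map (algebraMap Λ T)) ^ n,
      ∀ z : (T ⊗[Λ] N) ⊗[Λ] (T ⊗[Λ] M), t • z = 0 :=
    fun t ht => auxKill (P := (T ⊗[Λ] N) ⊗[Λ] (T ⊗[Λ] M)) hannP' t (hNak ht)
  -- approximation of elements of T
  have hsurj : ∀ t : T, ∃ a : Λ, t - algebraMap Λ T a ∈ (I.map (algebraMap Λ T)) ^ n := by
    intro t
    obtain ⟨abar, habar⟩ := (hiso n).2 (Ideal.Quotient.mk _ t)
    obtain ⟨a, rfl⟩ := Ideal.Quotient.mk_surjective abar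
    rw [Ideal.quotientMap_mk] at habar
    exact ⟨a, by rw [← neg_sub]; exact neg_mem ((Ideal.Quotient.eq).mp habar)⟩
  -- T-balancedness of the Λ-tensor product of base changes
  have hbal : ∀ (t : T) (x : T ⊗[Λ] M) (y : T ⊗[Λ] N),
      (t • x) ⊗ₜ[Λ] y = x ⊗ₜ[Λ] (t • y) := by
    intro t x y
    obtain ⟨a, hε⟩ := hsurj t
    have h₁ : ((t - algebraMap Λ T a) • x) ⊗ₜ[Λ] y = 0 := hIP _ hε (x ⊗ₜ[Λ] y)
    have h₂ : x ⊗ₜ[Λ] ((t - algebraMap Λ T a) • y) = 0 := by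
      have h0 : ((t - algebraMap Λ T a) • y) ⊗ₜ[Λ] x = 0 := hIP' _ hε (y ⊗ₜ[Λ] x)
      calc x ⊗ₜ[Λ] ((t - algebraMap Λ T a) • y)
          = (TensorProduct.comm Λ _ _) (((t - algebraMap Λ T a) • y) ⊗ₜ[Λ] x) := by
            rw [TensorProduct.comm_tmul]
        _ = 0 := by rw [h0, map_zero]
    have hts : ∀ (z : T ⊗[Λ] M), t • z = algebraMap Λ T a • z + (t - algebraMap Λ T a) • z :=
      fun z => by rw [← add_smul, add_sub_cancel]
    have hts' : ∀ (z : T ⊗[Λ] N), t • z = algebraMap Λ T a • z + (t - algebraMap Λ T a) • z :=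
      fun z => by rw [← add_smul, add_sub_cancel]
    calc (t • x) ⊗ₜ[Λ] y
        = (algebraMap Λ T a • x) ⊗ₜ[Λ] y + ((t - algebraMap Λ T a) • x) ⊗ₜ[Λ] y := by
          rw [hts x, add_tmul]
      _ = (a • x) ⊗ₜ[Λ] y := by rw [h₁, add_zero, algebraMap_smul]
      _ = x ⊗ₜ[Λ] (a • y) := smul_tmul a x y
      _ = x ⊗ₜ[Λ] (algebraMap Λ T a • y) + x ⊗ₜ[Λ] ((t - algebraMap Λ T a) • y) := by
          rw [h₂, add_zero, algebraMap_smul]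
      _ = x ⊗ₜ[Λ] (t • y) := by rw [← tmul_add, ← hts' y]
  refine ⟨part1, ?_, ?_, ?_, ?_⟩
  · -- e₁
    let f₁ : ((T ⊗[Λ] M) ⊗[Λ] (T ⊗[Λ] N)) →ₗ[Λ] ((T ⊗[Λ] M) ⊗[T] (T ⊗[Λ] N)) :=
      TensorProduct.lift (LinearMap.mk₂ Λ (fun x y => x ⊗ₜ[T] y)
        (fun x₁ x₂ y => add_tmul x₁ x₂ y)
        (fun a x y => (smul_tmul' a x y).symm)
        (fun x y₁ y₂ => tmul_add x y₁ y₂)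
        (fun a x y => tmul_smul a x y))
    let g₁ : ((T ⊗[Λ] M) ⊗[T] (T ⊗[Λ] N)) →ₗ[T] ((T ⊗[Λ] M) ⊗[Λ] (T ⊗[Λ] N)) :=
      TensorProduct.lift (LinearMap.mk₂ T (fun x y => x ⊗ₜ[Λ] y)
        (fun x₁ x₂ y => add_tmul x₁ x₂ y)
        (fun t x y => (smul_tmul' t x y).symm)
        (fun x y₁ y₂ => tmul_add x y₁ y₂)
        (fun t x y => by
          show x ⊗ₜ[Λ] (t • y) = t • (x ⊗ₜ[Λ] y)
          rw [← hbal t x y]; exact (smul_tmul' t x y).symm))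
    refine ⟨LinearEquiv.ofLinear f₁ (g₁.restrictScalars Λ) ?_ ?_, fun x y => rfl⟩
    · apply LinearMap.ext; intro z
      induction z using TensorProduct.induction_on with
      | zero => simp
      | tmul x y => simp [f₁, g₁]
      | add z w hz hw => simp only [map_add, LinearMap.id_coe, id_eq] at hz hw ⊢; rw [hz, hw]
    · apply LinearMap.ext; intro z
      induction z using TensorProduct.induction_on with
      | zero => simp
      | tmul x y => simp [f₁, g₁]
      | add z w hz hw => simp only [map_add, LinearMap.id_coe, id_eq] at hz hw ⊢; rw [hz, hw]
  · -- e₂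
    refine ⟨(TensorProduct.AlgebraTensorModule.distribBaseChange Λ T M N).restrictScalars Λ,
      fun t m x => ?_⟩
    rw [LinearEquiv.restrictScalars_apply]
    rw [TensorProduct.AlgebraTensorModule.distribBaseChange]
    rw [LinearEquiv.symm_apply_eq]
    simp [LinearEquiv.trans_apply]
  · -- e₃
    let ψ : (Λ ⧸ (I ^ n : Ideal Λ)) ≃+* (T ⧸ ((I.map (algebraMap Λ T)) ^ n : Ideal T)) :=
      RingEquiv.ofBijective _ (hiso n)
    let σ : T →+* Λ ⧸ (I ^ n : Ideal Λ) :=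
      ψ.symm.toRingHom.comp (Ideal.Quotient.mk _)
    have hco : ∀ x, ψ x = Ideal.quotientMap ((I.map (algebraMap Λ T)) ^ n) (algebraMap Λ T)
        (by rw [← Ideal.map_pow]; exact Ideal.le_comap_map) x := fun x => rfl
    have hσφ : ∀ a : Λ, σ (algebraMap Λ T a) = Ideal.Quotient.mk _ a := by
      intro a
      have h4 : ψ (Ideal.Quotient.mk _ a) = Ideal.Quotient.mk _ (algebraMap Λ T a) := by
        rw [hco, Ideal.quotientMap_mk]
      simp only [σ, RingHom.comp_apply, RingEquiv.toRingHom_eq_coe, RingHom.coe_coe]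
      rw [← h4, RingEquiv.symm_apply_apply]
    have hσsub : ∀ (t : T) (a : Λ), σ t = Ideal.Quotient.mk _ a →
        t - algebraMap Λ T a ∈ (I.map (algebraMap Λ T)) ^ n := by
      intro t a hta
      have h2 : ψ (σ t) = Ideal.Quotient.mk _ t := by
        simp only [σ, RingHom.comp_apply, RingEquiv.toRingHom_eq_coe, RingHom.coe_coe]
        rw [RingEquiv.apply_symm_apply]
      rw [hta] at h2
      have h3 : ψ (Ideal.Quotient.mk _ a) = Ideal.Quotient.mk _ (algebraMap Λ T a) := by
        rw [hco, Ideal.quotientMap_mk]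
      rw [h3] at h2
      rw [← neg_sub]
      exact neg_mem ((Ideal.Quotient.eq).mp h2)
    have hmkact : ∀ (c : Λ) (z : (M ⊗[Λ] N) ⧸ (I ^ n • (⊤ : Submodule Λ (M ⊗[Λ] N)))),
        Ideal.Quotient.mk (I ^ n) c • z = c • z := by
      intro c z
      obtain ⟨k, rfl⟩ := Submodule.Quotient.mk_surjective _ z
      rw [Module.Quotient.mk_smul_mk, Submodule.Quotient.mk_smul]
    let b₃ : T →ₗ[Λ] (M ⊗[Λ] N) →ₗ[Λ]
        ((M ⊗[Λ] N) ⧸ (I ^ n • (⊤ : Submodule Λ (M ⊗[Λ] N)))) :=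
      LinearMap.mk₂ Λ (fun t k => σ t • (Submodule.Quotient.mk k))
        (fun t₁ t₂ k => by beta_reduce; rw [map_add, add_smul])
        (fun a t k => by
          beta_reduce
          obtain ⟨b, hb⟩ := Ideal.Quotient.mk_surjective (σ t)
          rw [Algebra.smul_def, map_mul, hσφ a, ← hb, ← map_mul, hmkact, mul_smul, hmkact])
        (fun t k₁ k₂ => by beta_reduce; rw [Submodule.Quotient.mk_add, smul_add])
        (fun a t k => by
          beta_reduce
          obtain ⟨b, hb⟩ := Ideal.Quotient.mk_surjective (σ t)
          rw [← hb, hmkact, hmkact, Submodule.Quotient.mk_smul, smul_comm])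
    let f₃ := TensorProduct.lift b₃
    have hker : I ^ n • (⊤ : Submodule Λ (M ⊗[Λ] N)) ≤
        LinearMap.ker ((TensorProduct.mk Λ T (M ⊗[Λ] N)) 1) := by
      intro k hk
      rw [LinearMap.mem_ker]
      refine Submodule.smul_induction_on hk ?_ ?_
      · intro a ha z _
        have hφa : algebraMap Λ T a ∈ (I.map (algebraMap Λ T)) ^ n := by
          rw [← Ideal.map_pow]; exact Ideal.mem_map_of_mem _ ha
        show (1 : T) ⊗ₜ[Λ] (a • z) = 0
        rw [tmul_smul, ← algebraMap_smul T a]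
        exact hITK _ hφa _
      · intro x y hx hy
        rw [map_add, hx, hy, add_zero]
    let g₃ := Submodule.liftQ _ ((TensorProduct.mk Λ T (M ⊗[Λ] N)) 1) hker
    have hfg : f₃.comp g₃ = LinearMap.id := by
      apply LinearMap.ext; intro q
      obtain ⟨k, rfl⟩ := Submodule.Quotient.mk_surjective _ q
      have hg : g₃ (Submodule.Quotient.mk k) = (1 : T) ⊗ₜ[Λ] k := rfl
      simp only [LinearMap.comp_apply, LinearMap.id_apply, hg, f₃, b₃,
        TensorProduct.lift.tmul, LinearMap.mk₂_apply, map_one, one_smul]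
    have hgf : g₃.comp f₃ = LinearMap.id := by
      apply LinearMap.ext; intro z
      induction z using TensorProduct.induction_on with
      | zero => simp
      | tmul t k =>
          obtain ⟨a, ha⟩ := Ideal.Quotient.mk_surjective (σ t)
          have hmem := hσsub t a ha.symm
          simp only [LinearMap.comp_apply, LinearMap.id_apply, f₃, b₃,
            TensorProduct.lift.tmul, LinearMap.mk₂_apply]
          rw [← ha, hmkact, map_smul]
          have hg : g₃ (Submodule.Quotient.mk k) = (1 : T) ⊗ₜ[Λ] k := rfl
          rw [hg, ← algebraMap_smul T a, smul_tmul', smul_eq_mul, mul_one]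
          have h0 : (t - algebraMap Λ T a) ⊗ₜ[Λ] k = 0 := by
            have h1 := hITK _ hmem ((1 : T) ⊗ₜ[Λ] k)
            rwa [smul_tmul', smul_eq_mul, mul_one] at h1
          rw [sub_tmul, sub_eq_zero] at h0
          exact h0.symm
      | add z w hz hw => simp only [map_add, LinearMap.id_coe, id_eq] at hz hw ⊢; rw [hz, hw]
    exact ⟨LinearEquiv.ofLinear f₃ g₃ hfg hgf, fun x => by
      simp only [LinearEquiv.ofLinear_apply, f₃, b₃, TensorProduct.lift.tmul,
        LinearMap.mk₂_apply, map_one, one_smul]⟩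
  · -- e₄
    have hleft : ∀ m : M, m ∈ (I ^ n • ⊤ : Submodule Λ M) → ∀ x : N,
        m ⊗ₜ[Λ] x ∈ I ^ n • (⊤ : Submodule Λ (M ⊗[Λ] N)) := by
      intro m hm
      refine Submodule.smul_induction_on hm ?_ ?_
      · intro a ha m' _ x
        rw [← smul_tmul']
        exact Submodule.smul_mem_smul ha trivial
      · intro u v hu hv x
        rw [add_tmul]
        exact Submodule.add_mem _ (hu x) (hv x)
    have hright : ∀ x : N, x ∈ (I ^ n • ⊤ : Submodule Λ N) → ∀ m : M,
        m ⊗ₜ[Λ] x ∈ I ^ n • (⊤ : Submodule Λ (M ⊗[Λ] N)) := by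
      intro x hx
      refine Submodule.smul_induction_on hx ?_ ?_
      · intro a ha x' _ m
        rw [tmul_smul]
        exact Submodule.smul_mem_smul ha trivial
      · intro u v hu hv m
        rw [tmul_add]
        exact Submodule.add_mem _ (hu m) (hv m)
    have hEq : I ^ n • (⊤ : Submodule Λ (M ⊗[Λ] N)) =
        LinearMap.range (TensorProduct.map (I ^ n • (⊤ : Submodule Λ M)).subtype
          LinearMap.id) ⊔
        LinearMap.range (TensorProduct.map LinearMap.id
          (I ^ n • (⊤ : Submodule Λ N)).subtype) := by
      apply le_antisymm
      · rw [Submodule.smul_le]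
        intro a ha z hz
        clear hz
        induction z using TensorProduct.induction_on with
        | zero => rw [smul_zero]; exact Submodule.zero_mem _
        | tmul m x =>
            apply Submodule.mem_sup_left
            refine ⟨(⟨a • m, Submodule.smul_mem_smul ha trivial⟩ :
              (I ^ n • (⊤ : Submodule Λ M) : Submodule Λ M)) ⊗ₜ[Λ] x, ?_⟩
            rw [TensorProduct.map_tmul, smul_tmul']
            rfl
        | add z w hz hw => rw [smul_add]; exact Submodule.add_mem _ hz hw
      · apply sup_le
        · rintro _ ⟨z, rfl⟩
          induction z using TensorProduct.induction_on with
          | zero => rw [map_zero]; exact Submodule.zero_mem _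
          | tmul m x =>
              rw [TensorProduct.map_tmul]
              exact hleft m.1 m.2 (LinearMap.id x)
          | add z w hz hw => rw [map_add]; exact Submodule.add_mem _ hz hw
        · rintro _ ⟨z, rfl⟩
          induction z using TensorProduct.induction_on with
          | zero => rw [map_zero]; exact Submodule.zero_mem _
          | tmul m x =>
              rw [TensorProduct.map_tmul]
              exact hright x.1 x.2 (LinearMap.id m)
          | add z w hz hw => rw [map_add]; exact Submodule.add_mem _ hz hw
    refine ⟨(Submodule.quotEquivOfEq _ _ hEq) ≪≫ₗ
      (TensorProduct.quotientTensorQuotientEquiv _ _).symm, fun m x => ?_⟩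
    rw [LinearEquiv.trans_apply, Submodule.quotEquivOfEq_mk]
    exact TensorProduct.quotientTensorQuotientEquiv_symm_apply_mk_tmul _ _ m x
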